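/- arXiv:1710.08646 — 2 statements merged into one kernel-verified Lean document; each statement's English description precedes it below -/
import Mathlib

section
/- Let β = (β_1, …, β_{d+1}) satisfy β_1 ≥ ⋯ ≥ β_{d+1} > 0 and β_1 + ⋯ + β_{d+1} = 1. If for some ℓ ∈ [d] the equality ∏_{i=1}^t (β_i - β_{d+1}) = ∑_{j=t+1}^{d+1} (β_j - β_{d+1}) + (d+1) β_{d+1} holds for every t ∈ [ℓ], then β_i = 1/s_i + β_{d+1} for every i ∈ [ℓ], where s_i is the i-th Sylvester number. -/
/-- The Sylvester sequence: `s 1 = 2` and `s i = 1 + s 1 * s 2 * ⋯ * s (i-1)` for `i ≥ 2`. -/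
def sylvester : ℕ → ℕ
  | 0 => 2
  | 1 => 2
  | n + 2 => 1 + ∏ i ∈ (Finset.Icc 1 (n + 1)).attach, sylvester i.1
  decreasing_by
    exact Nat.lt_succ_of_le (Finset.mem_Icc.mp i.2).2

lemma sylvester_succ_eq (t : ℕ) (ht : 1 ≤ t) :
    sylvester (t + 1) = 1 + ∏ i ∈ Finset.Icc 1 t, sylvester i := by
  obtain ⟨n, rfl⟩ := Nat.exists_eq_add_of_le ht
  simp only [Nat.add_comm 1 n]
  rw [show n + 1 + 1 = n + 2 by ring, sylvester]
  rw [Finset.prod_attach (Finset.Icc 1 (n+1)) (fun i => sylvester i)]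

lemma sylvester_pos (n : ℕ) : 0 < sylvester n := by
  match n with
  | 0 => rw [sylvester]; norm_num
  | 1 => rw [sylvester]; norm_num
  | n + 2 => rw [sylvester]; omega

theorem ps_equalities_give_sylvester (d ℓ : ℕ) (hd : 1 ≤ d) (β : ℕ → ℝ)
    (hord : ∀ t, 1 ≤ t → t ≤ d → β (t + 1) ≤ β t)
    (hpos : 0 < β (d + 1))
    (hsum : ∑ i ∈ Finset.Icc 1 (d + 1), β i = 1)
    (hℓ : ℓ ∈ Finset.Icc 1 d)
    (heq : ∀ t ∈ Finset.Icc 1 ℓ,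
      ∏ i ∈ Finset.Icc 1 t, (β i - β (d + 1)) =
        (∑ j ∈ Finset.Icc (t + 1) (d + 1), (β j - β (d + 1))) + ((d : ℝ) + 1) * β (d + 1)) :
    ∀ i ∈ Finset.Icc 1 ℓ, β i = 1 / (sylvester i : ℝ) + β (d + 1) := by
  obtain ⟨hℓ1, hℓd⟩ := Finset.mem_Icc.mp hℓ
  set c := β (d + 1) with hc
  -- total sum of γ
  have htot : ∑ i ∈ Finset.Icc 1 (d + 1), (β i - c) = 1 - ((d : ℝ) + 1) * c := by
    rw [Finset.sum_sub_distrib, hsum, Finset.sum_const, Nat.card_Icc]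
    push_cast
    ring
  -- key reformulation
  have key : ∀ t, 1 ≤ t → t ≤ ℓ →
      ∏ i ∈ Finset.Icc 1 t, (β i - c) = 1 - ∑ i ∈ Finset.Icc 1 t, (β i - c) := by
    intro t h1 h2
    have h := heq t (Finset.mem_Icc.mpr ⟨h1, h2⟩)
    have hsplit : (∑ i ∈ Finset.Icc 1 t, (β i - c)) +
        ∑ j ∈ Finset.Icc (t + 1) (d + 1), (β j - c) =
        ∑ i ∈ Finset.Icc 1 (d + 1), (β i - c) := by
      rw [← Finset.Ico_add_one_right_eq_Icc 1 t, ← Finset.Ico_add_one_right_eq_Icc (t+1) (d+1),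
        ← Finset.Ico_add_one_right_eq_Icc 1 (d+1)]
      exact Finset.sum_Ico_consecutive _ (by omega) (by omega)
    rw [htot] at hsplit
    linarith
  -- main induction
  have main : ∀ t, 1 ≤ t → t ≤ ℓ →
      (β t - c = 1 / (sylvester t : ℝ)) ∧
      ∏ i ∈ Finset.Icc 1 t, (β i - c) = (∏ i ∈ Finset.Icc 1 t, (sylvester i : ℝ))⁻¹ := by
    intro t h1
    induction t, h1 using Nat.le_induction with
    | base =>
      intro h2
      have h := key 1 le_rfl h2
      simp only [Finset.Icc_self, Finset.prod_singleton, Finset.sum_singleton] at h ⊢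
      have hs1 : (sylvester 1 : ℝ) = 2 := by rw [sylvester]; norm_num
      constructor
      · rw [hs1]; linarith
      · rw [hs1]; rw [show (2:ℝ)⁻¹ = 1/2 by norm_num]; linarith
    | succ t ht ih =>
      intro h2
      have htℓ : t ≤ ℓ := by omega
      obtain ⟨ihγ, ihP⟩ := ih htℓ
      set Q : ℝ := ∏ i ∈ Finset.Icc 1 t, (sylvester i : ℝ) with hQ
      have hQpos : 0 < Q := Finset.prod_pos fun i _ => by
        exact_mod_cast sylvester_pos i
      have hkt := key t ht htℓ
      have hkt1 := key (t + 1) (by omega) h2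
      rw [Finset.prod_Icc_succ_top (by omega : 1 ≤ t + 1),
        Finset.sum_Icc_succ_top (by omega : 1 ≤ t + 1)] at hkt1
      -- hkt1 : P * γ_{t+1} = 1 - (S_t + γ_{t+1}) ; with hkt : P = 1 - S_t
      set γ : ℝ := β (t + 1) - c with hγ
      have hrec : Q⁻¹ * γ = Q⁻¹ - γ := by
        rw [← ihP]
        rw [hkt] at hkt1 ⊢
        linarith [hkt1]
      have hγval : γ = (Q + 1)⁻¹ := by
        have hQ1 : Q + 1 ≠ 0 := by positivity
        field_simp at hrec ⊢
        linarith [hrec]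
      have hsylv : (sylvester (t + 1) : ℝ) = Q + 1 := by
        rw [sylvester_succ_eq t ht]
        push_cast
        ring
      constructor
      · rw [hγval, hsylv, one_div]
      · rw [Finset.prod_Icc_succ_top (by omega : 1 ≤ t + 1), ihP,
          Finset.prod_Icc_succ_top (by omega : 1 ≤ t + 1), ← hQ, ← hγ, hγval, hsylv,
          mul_inv]
  intro i hi
  obtain ⟨h1, h2⟩ := Finset.mem_Icc.mp hi
  have := (main i h1 h2).1
  linarith
end

section
/- For d ≥ 5 and 1 ≤ ℓ ≤ d-3, one has y_ℓ ≤ y_{ℓ+1}, where y_ℓ = (s_ℓ - 1)^2 (d+1)^{d-ℓ+1} (s_{ℓ+1} - 1)^{d-ℓ} and s_i is the i-th Sylvester number. -/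
lemma sylvester_def (n : ℕ) :
    sylvester (n + 2) = 1 + ∏ i ∈ Finset.Icc 1 (n + 1), sylvester i := by
  rw [sylvester]
  congr 1
  exact Finset.prod_attach _ _

lemma sylvester_prod (n : ℕ) :
    ∏ i ∈ Finset.Icc 1 n, sylvester i = sylvester (n + 1) - 1 := by
  cases n with
  | zero => simp [sylvester]
  | succ m => rw [sylvester_def]; omega

lemma two_le_sylvester (n : ℕ) : 2 ≤ sylvester n := by
  induction n using Nat.strong_induction_on with
  | _ n ih =>
    match n with
    | 0 => simp [sylvester]
    | 1 => simp [sylvester]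
    | m + 2 =>
      rw [sylvester_def]
      have h : 1 ≤ ∏ i ∈ Finset.Icc 1 (m + 1), sylvester i :=
        Finset.one_le_prod' fun i hi => by
          have := ih i (by have := (Finset.mem_Icc.mp hi).2; omega)
          omega
      omega

lemma sylvester_rec (n : ℕ) (hn : 1 ≤ n) :
    sylvester (n + 1) - 1 = sylvester n * (sylvester n - 1) := by
  obtain ⟨m, rfl⟩ : ∃ m, n = m + 1 := ⟨n - 1, by omega⟩
  rw [← sylvester_prod, Finset.prod_Icc_succ_top (by omega), sylvester_prod, mul_comm]

lemma sylvester_ge (n : ℕ) (hn : 1 ≤ n) : n + 1 ≤ sylvester n := by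
  induction n with
  | zero => omega
  | succ m ih =>
    rcases Nat.eq_zero_or_pos m with rfl | hm
    · simp [sylvester]
    · have h1 := ih hm
      have h2 := two_le_sylvester m
      have h3 := sylvester_rec m hm
      have h4 : sylvester m ≤ sylvester m * (sylvester m - 1) :=
        Nat.le_mul_of_pos_right _ (by omega)
      generalize sylvester m * (sylvester m - 1) = c at h3 h4
      omega

lemma core (A D B m : ℕ) (hAB : A ^ 2 ≤ B) (hD : D ≤ (B + 1) ^ (m + 2)) :
    A ^ 2 * D ^ (m + 4) * B ^ (m + 3) ≤ B ^ 2 * D ^ (m + 3) * ((B + 1) * B) ^ (m + 2) :=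
  calc A ^ 2 * D ^ (m + 4) * B ^ (m + 3)
      = (A ^ 2 * D) * (D ^ (m + 3) * B ^ (m + 3)) := by ring
    _ ≤ (B * (B + 1) ^ (m + 2)) * (D ^ (m + 3) * B ^ (m + 3)) :=
        Nat.mul_le_mul_right _ (Nat.mul_le_mul hAB hD)
    _ = B ^ 2 * D ^ (m + 3) * ((B + 1) * B) ^ (m + 2) := by rw [mul_pow]; ring

lemma key (d ℓ : ℕ) (hd : 5 ≤ d) (hℓ : 1 ≤ ℓ) (hℓd : ℓ ≤ d - 3) :
    (sylvester ℓ - 1) ^ 2 * (d + 1) ^ (d - ℓ + 1) * (sylvester (ℓ + 1) - 1) ^ (d - ℓ) ≤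
      (sylvester (ℓ + 1) - 1) ^ 2 * (d + 1) ^ (d - (ℓ + 1) + 1) *
        (sylvester (ℓ + 2) - 1) ^ (d - (ℓ + 1)) := by
  obtain ⟨m, hm⟩ : ∃ m, d - ℓ = m + 3 := ⟨d - ℓ - 3, by omega⟩
  have h1 : d - ℓ + 1 = m + 4 := by omega
  have h2 : d - (ℓ + 1) = m + 2 := by omega
  have h3 : d - (ℓ + 1) + 1 = m + 3 := by omega
  rw [h1, hm, h3, h2]
  set A := sylvester ℓ - 1 with hA
  have hsA : sylvester ℓ = A + 1 := by have := two_le_sylvester ℓ; omega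
  have hB : sylvester (ℓ + 1) - 1 = (A + 1) * A := by
    rw [sylvester_rec ℓ hℓ, hsA, Nat.add_sub_cancel]
  have hsB : sylvester (ℓ + 1) = (A + 1) * A + 1 := by
    have := two_le_sylvester (ℓ + 1); omega
  have hC : sylvester (ℓ + 2) - 1 = ((A + 1) * A + 1) * ((A + 1) * A) := by
    rw [sylvester_rec (ℓ + 1) (by omega), hsB, Nat.add_sub_cancel]
  rw [hB, hC]
  -- Bernoulli-type bound : d + 1 ≤ ((A+1)*A + 1) ^ (m + 2)
  have hbern : d + 1 ≤ ((A + 1) * A + 1) ^ (m + 2) := by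
    have hge : ℓ + 2 ≤ (A + 1) * A + 1 := by
      rw [← hsB]; exact sylvester_ge (ℓ + 1) (by omega)
    have h4 : (1 : ℕ) + (m + 2) * (ℓ + 1) ≤ (1 + (ℓ + 1)) ^ (m + 2) :=
      one_add_mul_le_pow_of_sq_nonneg (by positivity) (by positivity) (by omega) (m + 2)
    have hd' : d = ℓ + m + 3 := by omega
    have h5 : d + 1 ≤ 1 + (m + 2) * (ℓ + 1) := by nlinarith
    calc d + 1 ≤ (1 + (ℓ + 1)) ^ (m + 2) := le_trans h5 h4
      _ ≤ ((A + 1) * A + 1) ^ (m + 2) :=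
        Nat.pow_le_pow_left (by omega) _
  exact core A (d + 1) ((A + 1) * A) m (by nlinarith) hbern

theorem y_monotone (d ℓ : ℕ) (hd : 5 ≤ d) (hℓ : 1 ≤ ℓ) (hℓd : ℓ ≤ d - 3) :
    ((sylvester ℓ : ℝ) - 1) ^ 2 * ((d : ℝ) + 1) ^ (d - ℓ + 1) *
        ((sylvester (ℓ + 1) : ℝ) - 1) ^ (d - ℓ) ≤
      ((sylvester (ℓ + 1) : ℝ) - 1) ^ 2 * ((d : ℝ) + 1) ^ (d - (ℓ + 1) + 1) *
        ((sylvester (ℓ + 2) : ℝ) - 1) ^ (d - (ℓ + 1)) := by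
  have e1 : ((sylvester ℓ : ℝ) - 1) = ((sylvester ℓ - 1 : ℕ) : ℝ) := by
    have := two_le_sylvester ℓ; push_cast [Nat.cast_sub (by omega : 1 ≤ sylvester ℓ)]; ring
  have e2 : ((sylvester (ℓ + 1) : ℝ) - 1) = ((sylvester (ℓ + 1) - 1 : ℕ) : ℝ) := by
    have := two_le_sylvester (ℓ + 1)
    push_cast [Nat.cast_sub (by omega : 1 ≤ sylvester (ℓ + 1))]; ring
  have e3 : ((sylvester (ℓ + 2) : ℝ) - 1) = ((sylvester (ℓ + 2) - 1 : ℕ) : ℝ) := by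
    have := two_le_sylvester (ℓ + 2)
    push_cast [Nat.cast_sub (by omega : 1 ≤ sylvester (ℓ + 2))]; ring
  rw [e1, e2, e3]
  have := key d ℓ hd hℓ hℓd
  exact_mod_cast this
end
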